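/- Let ABC be an equilateral triangle in the Euclidean plane with circumcenter O = (A + B + C)/3 and circumradius R = d(O,A). A point M of the plane yields a degenerative triangle from the distances d1 = d(M,A), d2 = d(M,B), d3 = d(M,C) — i.e., d1 + d2 = d3 or d2 + d3 = d1 or d3 + d1 = d2 — if and only if M lies on the circumcircle, i.e., d(M,O) = R. -/

import Mathlib

open Complex ComplexConjugate

noncomputable section

/-- Compatibility: the complex absolute value, as an `AbsoluteValue` given by the norm. -/
def Complex.abs : AbsoluteValue ℂ ℝ := IsAbsoluteValue.toAbsoluteValue (norm : ℂ → ℝ)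

lemma Complex.norm_eq_abs (z : ℂ) : ‖z‖ = Complex.abs z := rfl

lemma Complex.abs_apply (z : ℂ) : Complex.abs z = Real.sqrt (normSq z) := Complex.norm_def z

lemma Complex.sq_abs (z : ℂ) : Complex.abs z ^ 2 = normSq z := Complex.sq_norm z

lemma Complex.abs_ofReal (r : ℝ) : Complex.abs (r : ℂ) = |r| := Complex.norm_real r

private lemma keyid (a a' b b' z z' t : ℂ) (ht : t ^ 2 - t + 1 = 0) :
    t * (z - a) * (z' - b') - (1 - t) * (z' - a') * (z - b)
    = (2 * t - 1) * ((z - (2 * a + b + t * (b - a)) / 3)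
        * (z' - (2 * a' + b' + (1 - t) * (b' - a')) / 3)
      - ((2 * a + b + t * (b - a)) / 3 - a)
        * ((2 * a' + b' + (1 - t) * (b' - a')) / 3 - a')) := by
  linear_combination (2/3 * (a * b' - a' * b + a' * z - b' * z + b * z' - a * z')) * ht

private lemma im_mul_conj_zero_of_sameRay {x y : ℂ} (h : SameRay ℝ x y) :
    (x * conj y).im = 0 := by
  rcases h with h | h | ⟨r1, r2, hr1, hr2, hxy⟩
  · simp [h]
  · simp [h]
  · have hc : (r2 : ℂ) * conj y = (r1 : ℂ) * conj x := by
      have := congrArg (starRingEnd ℂ) hxy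
      simpa [Complex.real_smul, map_mul] using this.symm
    have e : (r2 : ℂ) * (x * conj y) = ((r1 * Complex.normSq x : ℝ) : ℂ) := by
      push_cast
      rw [← Complex.mul_conj x]
      linear_combination x * hc
    have him : r2 * (x * conj y).im = 0 := by
      have h' := congrArg Complex.im e
      rwa [Complex.im_ofReal_mul, Complex.ofReal_im] at h'
    rcases mul_eq_zero.1 him with h | h
    · exact absurd h (ne_of_gt hr2)
    · exact h

set_option maxHeartbeats 1000000 in
/-- The main equivalence, stated for complex numbers. -/
private lemma key_complex (a b c z : ℂ)
    (h1 : Complex.abs (a - b) = Complex.abs (b - c))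
    (h2 : Complex.abs (b - c) = Complex.abs (c - a))
    (h3 : 0 < Complex.abs (a - b)) :
    (Complex.abs (z - a) + Complex.abs (z - b) = Complex.abs (z - c) ∨
     Complex.abs (z - b) + Complex.abs (z - c) = Complex.abs (z - a) ∨
     Complex.abs (z - c) + Complex.abs (z - a) = Complex.abs (z - b)) ↔
    Complex.abs (z - (a + b + c) / 3) = Complex.abs ((a + b + c) / 3 - a) := by
  set u := b - a with hu_def
  set v := c - a with hv_def
  have hau : Complex.abs (a - b) = Complex.abs u := by
    rw [hu_def, Complex.abs.map_sub]
  have hu0 : u ≠ 0 := by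
    intro h
    rw [h] at hau
    simp [hau] at h3
  have habs_v : Complex.abs v = Complex.abs u := by
    rw [← h2, ← h1, hau]
  have habs_uv : Complex.abs (u - v) = Complex.abs u := by
    have : u - v = b - c := by rw [hu_def, hv_def]; ring
    rw [this, ← h1, hau]
  -- obtain t
  set t := v / u with ht_def
  have hv : v = t * u := by rw [ht_def, div_mul_cancel₀ v hu0]
  have habst : Complex.abs t = 1 := by
    rw [ht_def, map_div₀, habs_v, div_self (Complex.abs.ne_zero hu0)]
  have habs1t : Complex.abs (1 - t) = 1 := by
    have h1t : 1 - t = (u - v) / u := by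
      rw [ht_def, eq_div_iff hu0, sub_mul, one_mul, div_mul_cancel₀ v hu0]
    rw [h1t, map_div₀, habs_uv, div_self (Complex.abs.ne_zero hu0)]
  have hns_t : normSq t = 1 := by
    rw [← Complex.sq_abs, habst]; norm_num
  have hns_1t : normSq (1 - t) = 1 := by
    rw [← Complex.sq_abs, habs1t]; norm_num
  rw [Complex.normSq_apply] at hns_t
  rw [Complex.normSq_apply, Complex.sub_re, Complex.sub_im, Complex.one_re, Complex.one_im] at hns_1t
  have htre : t.re = 1/2 := by nlinarith [hns_t, hns_1t]
  have htim2 : t.im ^ 2 = 3/4 := by nlinarith [hns_t]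
  have htim : t.im ≠ 0 := by
    intro h; rw [h] at htim2; norm_num at htim2
  have ht : t ^ 2 - t + 1 = 0 := by
    apply Complex.ext <;>
      simp [pow_two, Complex.mul_re, Complex.mul_im, Complex.sub_re, Complex.sub_im,
        Complex.add_re, Complex.add_im, Complex.one_re, Complex.one_im] <;>
      nlinarith [htre, htim2]
  have hconj : conj t = 1 - t := by
    apply Complex.ext
    · simp [Complex.conj_re, htre, Complex.sub_re]; norm_num [htre]
    · simp [Complex.conj_im, Complex.sub_im]
  clear_value t
  have hc : c = a + t * u := by rw [← hv, hv_def]; ring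
  clear_value u v
  set s := Complex.abs u with hs_def
  have hs : 0 < s := Complex.abs.pos hu0
  -- the three Ptolemy products
  set X := (z - a) * (b - c) with hX_def
  set Y := (z - b) * (c - a) with hY_def
  set Z := (z - c) * (a - b) with hZ_def
  clear_value X Y Z
  have hXYZ : X + Y + Z = 0 := by rw [hX_def, hY_def, hZ_def]; ring
  have habsX : Complex.abs X = Complex.abs (z - a) * s := by
    rw [hX_def, map_mul, ← h1, hau]
  have habsY : Complex.abs Y = Complex.abs (z - b) * s := by
    rw [hY_def, map_mul, ← hv_def, habs_v]
  have habsZ : Complex.abs Z = Complex.abs (z - c) * s := by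
    rw [hZ_def, map_mul, hau]
  -- the pivot quantity
  set w := t * (z - a) * (conj z - conj b) with hw_def
  clear_value w
  have hconjw : conj w = (1 - t) * (conj z - conj a) * (z - b) := by
    rw [hw_def, map_mul, map_mul, map_sub, map_sub, Complex.conj_conj, Complex.conj_conj, hconj]
  set o := (a + b + c) / 3 with ho_def
  clear_value o
  set r := normSq (z - o) - normSq (o - a) with hr_def
  clear_value r
  -- key identity
  have hokey : o = (2 * a + b + t * (b - a)) / 3 := by rw [ho_def, hc, hu_def]; ring
  have hconjo : conj o = (2 * conj a + conj b + (1 - t) * (conj b - conj a)) / 3 := by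
    rw [ho_def, hc, hu_def]
    simp only [map_div₀, map_add, map_mul, map_sub, map_ofNat, hconj]
    ring
  have hwsub : w - conj w = (2 * t - 1) * (r : ℂ) := by
    have hid := keyid a (conj a) b (conj b) z (conj z) t ht
    have e1 : (z - (2 * a + b + t * (b - a)) / 3)
        * (conj z - (2 * conj a + conj b + (1 - t) * (conj b - conj a)) / 3)
        = ((normSq (z - o) : ℝ) : ℂ) := by
      rw [← hokey, ← hconjo, ← map_sub, Complex.mul_conj]
    have e2 : ((2 * a + b + t * (b - a)) / 3 - a)
        * ((2 * conj a + conj b + (1 - t) * (conj b - conj a)) / 3 - conj a)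
        = ((normSq (o - a) : ℝ) : ℂ) := by
      rw [← hokey, ← hconjo, ← map_sub, Complex.mul_conj]
    rw [hconjw, hw_def, hid, e1, e2, hr_def]
    push_cast
    ring
  have h2t1 : 2 * t - 1 = ((2 * t.im : ℝ) : ℂ) * I := by
    have := Complex.sub_conj t
    rw [hconj] at this
    rw [← this]; ring
  have hwim : w.im = t.im * r := by
    have h1' : ((2 * w.im : ℝ) : ℂ) * I = ((2 * t.im * r : ℝ) : ℂ) * I := by
      rw [← Complex.sub_conj w, hwsub, h2t1]
      push_cast; ring
    have h2' : (2 * w.im : ℝ) = 2 * t.im * r := by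
      have := mul_right_cancel₀ Complex.I_ne_zero h1'
      exact_mod_cast this
    linarith
  -- X * conj Y in terms of w
  have hXY : X * conj Y = -((normSq u : ℝ) : ℂ) * w := by
    have hbc : b - c = (1 - t) * u := by rw [hc, hu_def]; ring
    have hca : c - a = t * u := by rw [hc]; ring
    have h1t2 : (1 - t) ^ 2 = -t := by linear_combination ht
    have hcY : conj Y = (conj z - conj b) * ((1 - t) * conj u) := by
      rw [hY_def, hca]
      simp only [map_mul, map_sub, hconj]
    rw [hX_def, hbc, hcY, hw_def, ← Complex.mul_conj u]
    linear_combination ((z - a) * (conj z - conj b) * u * conj u) * h1t2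
  have himXY : (X * conj Y).im = -(normSq u) * (t.im * r) := by
    rw [hXY, ← hwim]
    simp [Complex.mul_im, Complex.ofReal_re, Complex.ofReal_im]
  have hnsu : 0 < normSq u := Complex.normSq_pos.2 hu0
  -- equivalence between im = 0 and on circle
  have hiff2 : (X * conj Y).im = 0 ↔ Complex.abs (z - o) = Complex.abs (o - a) := by
    rw [himXY]
    constructor
    · intro h
      have hr0 : r = 0 := by
        rcases mul_eq_zero.1 h with h | h
        · exact absurd h (neg_ne_zero.2 (ne_of_gt hnsu))
        · rcases mul_eq_zero.1 h with h | h
          · exact absurd h htim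
          · exact h
      have : normSq (z - o) = normSq (o - a) := by rw [hr_def] at hr0; linarith
      rw [Complex.abs_apply, Complex.abs_apply, this]
    · intro h
      have : normSq (z - o) = normSq (o - a) := by
        rw [← Complex.sq_abs, ← Complex.sq_abs, h]
      have hr0 : r = 0 := by rw [hr_def, this]; ring
      rw [hr0]; ring
  rw [← hiff2]
  constructor
  · rintro (h | h | h)
    · have hray : SameRay ℝ X Y := by
        rw [sameRay_iff_norm_add]
        have hZXY : Z = -(X + Y) := by linear_combination hXYZ
        have : Complex.abs (X + Y) = Complex.abs X + Complex.abs Y := by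
          rw [show X + Y = -Z by rw [hZXY]; ring, Complex.abs.map_neg, habsZ, habsX, habsY, ← h]; ring
        simpa [Complex.norm_eq_abs] using this
      exact im_mul_conj_zero_of_sameRay hray
    · have hray : SameRay ℝ Y Z := by
        rw [sameRay_iff_norm_add]
        have hXYZ' : X = -(Y + Z) := by linear_combination hXYZ
        have : Complex.abs (Y + Z) = Complex.abs Y + Complex.abs Z := by
          rw [show Y + Z = -X by rw [hXYZ']; ring, Complex.abs.map_neg, habsX, habsY, habsZ, ← h]; ring
        simpa [Complex.norm_eq_abs] using this
      have h0 := im_mul_conj_zero_of_sameRay hray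
      have hYZ : Y * conj Z = -(conj (X * conj Y)) - ((normSq Y : ℝ) : ℂ) := by
        have : Z = -(X + Y) := by linear_combination hXYZ
        rw [this, ← Complex.mul_conj Y]
        simp only [map_neg, map_sub, map_add, map_mul, Complex.conj_conj]
        ring
      rw [hYZ] at h0
      simp only [Complex.sub_im, Complex.neg_im, Complex.conj_im, Complex.ofReal_im] at h0
      linarith
    · have hray : SameRay ℝ Z X := by
        rw [sameRay_iff_norm_add]
        have hXYZ' : Y = -(Z + X) := by linear_combination hXYZ
        have : Complex.abs (Z + X) = Complex.abs Z + Complex.abs X := by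
          rw [show Z + X = -Y by rw [hXYZ']; ring, Complex.abs.map_neg, habsY, habsZ, habsX, ← h]; ring
        simpa [Complex.norm_eq_abs] using this
      have h0 := im_mul_conj_zero_of_sameRay hray
      have hZX : Z * conj X = -(conj (X * conj Y)) - ((normSq X : ℝ) : ℂ) := by
        have : Z = -(X + Y) := by linear_combination hXYZ
        rw [this, ← Complex.mul_conj X]
        simp only [map_neg, map_sub, map_add, map_mul, Complex.conj_conj]
        ring
      rw [hZX] at h0
      simp only [Complex.sub_im, Complex.neg_im, Complex.conj_im, Complex.ofReal_im] at h0
      linarith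
  · intro him
    by_cases hY0 : Y = 0
    · -- then z = b
      have hca : c - a = t * u := by rw [hc]; ring
      have hca0 : c - a ≠ 0 := by
        rw [hca]
        apply mul_ne_zero _ hu0
        intro h; rw [h] at htim; simp at htim
      have hzb : z = b := by
        rw [hY_def] at hY0
        rcases mul_eq_zero.1 hY0 with h | h
        · exact sub_eq_zero.1 h
        · exact absurd h hca0
      left
      have hzb0 : Complex.abs (z - b) = 0 := by simp [hzb]
      have : Complex.abs X = Complex.abs Z := by
        have : X = -Z := by linear_combination hXYZ - hY0
        rw [this, Complex.abs.map_neg]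
      rw [habsX, habsZ] at this
      have := mul_right_cancel₀ (ne_of_gt hs) this
      rw [hzb0, this]; ring
    · -- X = l • Y for a real l
      have hnsY : normSq Y ≠ 0 := by
        simpa [Complex.normSq_eq_zero] using hY0
      set l := (X * conj Y).re / normSq Y with hl_def
      have hXl : X = (l : ℂ) * Y := by
        have hreal : X * conj Y = (((X * conj Y).re : ℝ) : ℂ) := by
          apply Complex.ext
          · simp
          · simp [him]
        have h1' : X * (normSq Y : ℂ) = (((X * conj Y).re : ℝ) : ℂ) * Y := by
          rw [← hreal, ← Complex.mul_conj Y]; ring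
        rw [hl_def]
        push_cast
        rw [div_mul_eq_mul_div, eq_div_iff (by exact_mod_cast hnsY)]
        rw [mul_comm X (normSq Y : ℂ)] at h1'
        rw [mul_comm] at h1'
        linear_combination h1'
      have habsXl : Complex.abs X = |l| * Complex.abs Y := by
        rw [hXl, map_mul, Complex.abs_ofReal]
      have hZl : Z = -((l + 1 : ℝ) : ℂ) * Y := by
        rw [show Z = -(X + Y) by linear_combination hXYZ, hXl]; push_cast; ring
      have habsZl : Complex.abs Z = |l + 1| * Complex.abs Y := by
        rw [hZl, map_mul, Complex.abs.map_neg, Complex.abs_ofReal]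
      have hp : Complex.abs (z - a) = |l| * Complex.abs (z - b) := by
        apply mul_right_cancel₀ (ne_of_gt hs)
        rw [← habsX, habsXl, habsY]; ring
      have hq : Complex.abs (z - c) = |l + 1| * Complex.abs (z - b) := by
        apply mul_right_cancel₀ (ne_of_gt hs)
        rw [← habsZ, habsZl, habsY]; ring
      rcases le_or_gt 0 l with hl | hl
      · left
        rw [hp, hq, _root_.abs_of_nonneg hl,
          _root_.abs_of_nonneg (show (0:ℝ) ≤ l + 1 by linarith)]
        ring
      · rcases le_or_gt l (-1) with hl2 | hl2
        · right; left
          rw [hp, hq, _root_.abs_of_nonpos (show l ≤ (0:ℝ) by linarith),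
            _root_.abs_of_nonpos (show l + 1 ≤ (0:ℝ) by linarith)]
          ring
        · right; right
          rw [hp, hq, _root_.abs_of_nonpos (show l ≤ (0:ℝ) by linarith),
            _root_.abs_of_nonneg (show (0:ℝ) ≤ l + 1 by linarith)]
          ring

end

/-- For an equilateral triangle `ABC` in the Euclidean plane with circumcenter
`O = (A + B + C)/3` and circumradius `R = d(O,A)`, the distances
`d1 = d(M,A)`, `d2 = d(M,B)`, `d3 = d(M,C)` form a degenerative triangle
(some triangle inequality is an equality) iff `M` lies on the circumcircle. -/
theorem degenerate_iff_on_circumcircle (A B C M : EuclideanSpace ℝ (Fin 2))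
    (h1 : dist A B = dist B C) (h2 : dist B C = dist C A) (h3 : 0 < dist A B) :
    (dist M A + dist M B = dist M C ∨
     dist M B + dist M C = dist M A ∨
     dist M C + dist M A = dist M B) ↔
    dist M ((3 : ℝ)⁻¹ • (A + B + C)) = dist ((3 : ℝ)⁻¹ • (A + B + C)) A := by
  classical
  set φ : EuclideanSpace ℝ (Fin 2) → ℂ := fun x => (x 0 : ℂ) + (x 1 : ℝ) * Complex.I with hφ_def
  have hφre : ∀ x, (φ x).re = x 0 := by
    intro x; simp [hφ_def]
  have hφim : ∀ x, (φ x).im = x 1 := by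
    intro x; simp [hφ_def]
  have hdist : ∀ x y : EuclideanSpace ℝ (Fin 2), dist x y = Complex.abs (φ x - φ y) := by
    intro x y
    rw [EuclideanSpace.dist_eq, Fin.sum_univ_two, Complex.abs_apply, Complex.normSq_apply,
      Complex.sub_re, Complex.sub_im, hφre, hφre, hφim, hφim, Real.dist_eq, Real.dist_eq,
      _root_.sq_abs, _root_.sq_abs]
    ring_nf
  set O := (3 : ℝ)⁻¹ • (A + B + C) with hO_def
  have hφO : φ O = (φ A + φ B + φ C) / 3 := by
    have hO0 : O 0 = 3⁻¹ * (A 0 + B 0 + C 0) := by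
      rw [hO_def]; simp [PiLp.smul_apply, PiLp.add_apply]; ring
    have hO1 : O 1 = 3⁻¹ * (A 1 + B 1 + C 1) := by
      rw [hO_def]; simp [PiLp.smul_apply, PiLp.add_apply]; ring
    rw [eq_div_iff (by norm_num : (3 : ℂ) ≠ 0)]
    apply Complex.ext
    · simp [Complex.add_re, Complex.mul_re, hφre, hO0]
      ring
    · simp [Complex.add_im, Complex.mul_im, hφim, hO1]
      ring
  rw [hdist M A, hdist M B, hdist M C, hdist M O, hdist O A, hφO]
  rw [hdist A B] at h1 h3
  rw [hdist B C] at h1 h2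
  rw [hdist C A] at h2
  exact key_complex (φ A) (φ B) (φ C) (φ M) h1 h2 h3
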